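/- Let k ≥ 1 and W a graphon, and let C₀, C₁, C₂, … and C^k_W be as in the iterative construction (C₀ the minimum μ^{⊗k}-relatively complete sub-σ-algebra whose L² subspace is invariant under all adjacency operators A^W_{ij}; C_{n+1} the intersection of all μ^{⊗k}-relatively complete D ⊇ C_n with N_j(L²(X^k, C_n, μ^{⊗k})) ⊆ L²(X^k, D, μ^{⊗k}) for all j; C^k_W the smallest μ^{⊗k}-relatively complete sub-σ-algebra containing ⋃_n C_n). Then every C_n (n ∈ ℕ) and C^k_W is permutation invariant: for every permutation π of {1,…,k}, the Koopman operator T_π maps the corresponding L² subspace into itself. -/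

import Mathlib

open MeasureTheory

noncomputable section

/-- A graphon: symmetric measurable `W : X × X → [0,1]`. -/
structure IsGraphon {X : Type*} [MeasurableSpace X] (W : X → X → ℝ) : Prop where
  measurable : Measurable (Function.uncurry W)
  symm : ∀ x y, W x y = W y x
  nonneg : ∀ x y, 0 ≤ W x y
  le_one : ∀ x y, W x y ≤ 1

/-- A sub-σ-algebra, wrapped in a structure (so that it does not interfere with
instance resolution). -/
structure SubSigma (α : Type*) where
  σ : MeasurableSpace α

/-- `m'` is a `μ`-relatively complete sub-σ-algebra of the ambient σ-algebra `mα`. -/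
def RelComplete {X : Type*} [mα : MeasurableSpace X]
    (μ : Measure X) (m' : SubSigma X) : Prop :=
  ∀ Z Z₀ : Set X, MeasurableSet[mα] Z → MeasurableSet[m'.σ] Z₀ →
    μ (symmDiff Z Z₀) = 0 → MeasurableSet[m'.σ] Z

/-- `L²(X^k, C, μ^{⊗k})` is invariant under every adjacency operator
`A^W_{ij} : f ↦ (x̄ ↦ W(x_i, x_j) · f(x̄))`, `i ≠ j`. -/
def AInvariant {X : Type*} [MeasurableSpace X] (μ : Measure X) (W : X → X → ℝ)
    {k : ℕ} (C : SubSigma (Fin k → X)) : Prop :=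
  ∀ i j : Fin k, i ≠ j → ∀ f : (Fin k → X) → ℝ,
    MemLp f 2 (Measure.pi fun _ : Fin k => μ) →
    AEStronglyMeasurable[C.σ] f (Measure.pi fun _ : Fin k => μ) →
    MemLp (fun x => W (x i) (x j) * f x) 2 (Measure.pi fun _ : Fin k => μ) ∧
      AEStronglyMeasurable[C.σ] (fun x => W (x i) (x j) * f x)
        (Measure.pi fun _ : Fin k => μ)

/-- The neighbor operators `N_j : f ↦ (x̄ ↦ ∫ f(x̄[y/j]) dμ(y))` map `L²(X^k, C, μ^{⊗k})`
into `L²(X^k, D, μ^{⊗k})`. -/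
def NMapsInto {X : Type*} [MeasurableSpace X] (μ : Measure X)
    {k : ℕ} (C D : SubSigma (Fin k → X)) : Prop :=
  ∀ (j : Fin k) (f : (Fin k → X) → ℝ),
    MemLp f 2 (Measure.pi fun _ : Fin k => μ) →
    AEStronglyMeasurable[C.σ] f (Measure.pi fun _ : Fin k => μ) →
    MemLp (fun x => ∫ y, f (Function.update x j y) ∂μ) 2
        (Measure.pi fun _ : Fin k => μ) ∧
      AEStronglyMeasurable[D.σ] (fun x => ∫ y, f (Function.update x j y) ∂μ)
        (Measure.pi fun _ : Fin k => μ)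

/-- The iterative construction: `C₀` is the smallest `μ^{⊗k}`-relatively complete
sub-σ-algebra whose `L²` subspace is invariant under all adjacency operators `A^W_{ij}`,
and `C_{n+1}` is the intersection of all `μ^{⊗k}`-relatively complete `D ⊇ C_n` with
`N_j(L²(C_n)) ⊆ L²(D)` for every `j`. -/
noncomputable def CSeq {X : Type*} [MeasurableSpace X] (μ : Measure X) (W : X → X → ℝ)
    (k : ℕ) : ℕ → MeasurableSpace (Fin k → X)
  | 0 => sInf {m | m ≤ (MeasurableSpace.pi : MeasurableSpace (Fin k → X)) ∧
      RelComplete (mα := (MeasurableSpace.pi : MeasurableSpace (Fin k → X))) (Measure.pi fun _ : Fin k => μ) ⟨m⟩ ∧ AInvariant μ W ⟨m⟩}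
  | (n + 1) => sInf {m | m ≤ (MeasurableSpace.pi : MeasurableSpace (Fin k → X)) ∧
      RelComplete (mα := (MeasurableSpace.pi : MeasurableSpace (Fin k → X))) (Measure.pi fun _ : Fin k => μ) ⟨m⟩ ∧ CSeq μ W k n ≤ m ∧
      NMapsInto μ ⟨CSeq μ W k n⟩ ⟨m⟩}

/-- `C^k_W`: the smallest `μ^{⊗k}`-relatively complete sub-σ-algebra containing all the
`C_n` of the iterative construction. -/
noncomputable def CLimit {X : Type*} [MeasurableSpace X] (μ : Measure X) (W : X → X → ℝ)
    (k : ℕ) : MeasurableSpace (Fin k → X) :=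
  sInf {m | m ≤ (MeasurableSpace.pi : MeasurableSpace (Fin k → X)) ∧
    RelComplete (mα := (MeasurableSpace.pi : MeasurableSpace (Fin k → X))) (Measure.pi fun _ : Fin k => μ) ⟨m⟩ ∧ ∀ n : ℕ, CSeq μ W k n ≤ m}

/-- A sub-σ-algebra `C` is permutation invariant if, for every permutation `π` of the
coordinates, the Koopman operator `T_π : f ↦ (x̄ ↦ f(x_{π(1)},…,x_{π(k)}))` maps
`L²(X^k, C, μ^{⊗k})` into itself. -/
def PermInvariantAlg {X : Type*} [MeasurableSpace X] (μ : Measure X)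
    {k : ℕ} (C : SubSigma (Fin k → X)) : Prop :=
  ∀ (π : Equiv.Perm (Fin k)) (f : (Fin k → X) → ℝ),
    MemLp f 2 (Measure.pi fun _ : Fin k => μ) →
    AEStronglyMeasurable[C.σ] f (Measure.pi fun _ : Fin k => μ) →
    MemLp (fun x => f (fun i => x (π i))) 2 (Measure.pi fun _ : Fin k => μ) ∧
      AEStronglyMeasurable[C.σ] (fun x => f (fun i => x (π i)))
        (Measure.pi fun _ : Fin k => μ)

namespace Stmt12Aux

variable {X : Type*} [MeasurableSpace X] (μ : Measure X) [IsProbabilityMeasure μ] {k : ℕ}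

/-- The coordinate permutation (Koopman base) map. -/
def σmap (π : Equiv.Perm (Fin k)) : (Fin k → X) → (Fin k → X) := fun x i => x (π i)

lemma sigma_sigma (π π' : Equiv.Perm (Fin k)) (x : Fin k → X) :
    σmap π' (σmap π x) = σmap (π * π') x := rfl

lemma sigma_one : σmap (X := X) (1 : Equiv.Perm (Fin k)) = id := rfl

lemma measurable_sigma (π : Equiv.Perm (Fin k)) : Measurable (σmap (X := X) π) :=
  measurable_pi_lambda _ fun i => measurable_pi_apply _

lemma mp_perm (π : Equiv.Perm (Fin k)) :
    MeasurePreserving (σmap (X := X) π)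
      (Measure.pi fun _ : Fin k => μ) (Measure.pi fun _ : Fin k => μ) := by
  have h := (measurePreserving_piCongrLeft (fun _ : Fin k => μ) π).symm
    ((MeasurableEquiv.piCongrLeft (fun _ : Fin k => X) π))
  convert h using 2
  funext x i
  rfl

/-- Action of a permutation on sub-σ-algebras, by pulling back along `σmap π`. -/
def Phi (π : Equiv.Perm (Fin k)) (m : MeasurableSpace (Fin k → X)) :
    MeasurableSpace (Fin k → X) :=
  m.comap (σmap π)

lemma Phi_mono (π : Equiv.Perm (Fin k)) {m m' : MeasurableSpace (Fin k → X)}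
    (h : m ≤ m') : Phi π m ≤ Phi π m' :=
  MeasurableSpace.comap_mono h

lemma Phi_comp (π π' : Equiv.Perm (Fin k)) (m : MeasurableSpace (Fin k → X)) :
    Phi π (Phi π' m) = Phi (π * π') m := by
  simp only [Phi, MeasurableSpace.comap_comp]
  congr 1

lemma Phi_one (m : MeasurableSpace (Fin k → X)) : Phi 1 m = m := by
  simp only [Phi, sigma_one, MeasurableSpace.comap_id]

lemma Phi_inv_Phi (π : Equiv.Perm (Fin k)) (m : MeasurableSpace (Fin k → X)) :
    Phi π (Phi π⁻¹ m) = m := by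
  rw [Phi_comp, mul_inv_cancel, Phi_one]

lemma Phi_pi (π : Equiv.Perm (Fin k)) :
    Phi π (MeasurableSpace.pi : MeasurableSpace (Fin k → X)) = MeasurableSpace.pi := by
  refine le_antisymm ?_ ?_
  · exact MeasurableSpace.comap_le_iff_le_map.mpr (fun s hs => (measurable_sigma π) hs)
  · conv_lhs => rw [← Phi_inv_Phi (X := X) (k := k) π MeasurableSpace.pi]
    exact Phi_mono π (MeasurableSpace.comap_le_iff_le_map.mpr
      (fun s hs => (measurable_sigma π⁻¹) hs))

lemma measurable_sigma_comap (π : Equiv.Perm (Fin k)) (m : MeasurableSpace (Fin k → X)) :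
    @Measurable _ _ (Phi π m) m (σmap π) :=
  fun s hs => ⟨s, hs, rfl⟩

variable {μ}

lemma aesm_comp (m : SubSigma (Fin k → X)) {g : (Fin k → X) → ℝ}
    (π : Equiv.Perm (Fin k))
    (h : AEStronglyMeasurable[m.σ] g (Measure.pi fun _ : Fin k => μ)) :
    AEStronglyMeasurable[Phi π m.σ] (fun x => g (σmap π x))
      (Measure.pi fun _ : Fin k => μ) := by
  obtain ⟨g', hg', hae⟩ := h
  have hsm : StronglyMeasurable[Phi π m.σ] (fun x => g' (σmap π x)) :=
    StronglyMeasurable.comp_measurable (f := g') (g := σmap π) hg'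
      (measurable_sigma_comap π m.σ)
  refine ⟨fun x => g' (σmap π x), hsm, ?_⟩
  exact (mp_perm μ π).quasiMeasurePreserving.ae_eq_comp hae

lemma memlp_comp (π : Equiv.Perm (Fin k)) {f : (Fin k → X) → ℝ}
    (h : MemLp f 2 (Measure.pi fun _ : Fin k => μ)) :
    MemLp (fun x => f (σmap π x)) 2 (Measure.pi fun _ : Fin k => μ) :=
  h.comp_measurePreserving (mp_perm μ π)

lemma relComplete_Phi (m : SubSigma (Fin k → X)) (hle : m.σ ≤ MeasurableSpace.pi)
    (hrc : RelComplete (mα := (MeasurableSpace.pi : MeasurableSpace (Fin k → X)))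
      (Measure.pi fun _ : Fin k => μ) m) (π : Equiv.Perm (Fin k)) :
    RelComplete (mα := (MeasurableSpace.pi : MeasurableSpace (Fin k → X)))
      (Measure.pi fun _ : Fin k => μ) ⟨Phi π m.σ⟩ := by
  intro Z Z₀ hZ hZ₀ hμ0
  obtain ⟨t, ht, rfl⟩ := hZ₀
  have hZZ : σmap (X := X) π ⁻¹' (σmap π⁻¹ ⁻¹' Z) = Z := by
    ext x
    simp [Set.mem_preimage, sigma_sigma, sigma_one]
  refine ⟨σmap π⁻¹ ⁻¹' Z, ?_, hZZ⟩
  refine hrc _ t (measurable_sigma π⁻¹ hZ) ht ?_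
  have htt : σmap (X := X) π⁻¹ ⁻¹' (σmap π ⁻¹' t) = t := by
    ext x
    simp [Set.mem_preimage, sigma_sigma, sigma_one]
  calc (Measure.pi fun _ : Fin k => μ) (symmDiff (σmap π⁻¹ ⁻¹' Z) t)
      = (Measure.pi fun _ : Fin k => μ)
          (σmap π⁻¹ ⁻¹' (symmDiff Z (σmap π ⁻¹' t))) := by
        rw [Set.preimage_symmDiff, htt]
    _ = 0 := (mp_perm μ π⁻¹).quasiMeasurePreserving.preimage_null hμ0

lemma ainv_Phi {W : X → X → ℝ} (m : SubSigma (Fin k → X))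
    (hA : AInvariant μ W m) (π : Equiv.Perm (Fin k)) :
    AInvariant μ W (⟨Phi π m.σ⟩ : SubSigma (Fin k → X)) := by
  intro i j hij f hf hfm
  have hF : MemLp (fun x => f (σmap π⁻¹ x)) 2 (Measure.pi fun _ : Fin k => μ) :=
    memlp_comp π⁻¹ hf
  have hFm : AEStronglyMeasurable[m.σ] (fun x => f (σmap π⁻¹ x))
      (Measure.pi fun _ : Fin k => μ) := by
    have h := aesm_comp ⟨Phi π m.σ⟩ π⁻¹ hfm
    rwa [Phi_comp, inv_mul_cancel, Phi_one] at h
  have hij' : (π⁻¹ i : Fin k) ≠ π⁻¹ j := fun h => hij (π⁻¹.injective h)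
  obtain ⟨h1, h2⟩ := hA (π⁻¹ i) (π⁻¹ j) hij' _ hF hFm
  have key : (fun x : Fin k → X => W (x i) (x j) * f x)
      = (fun x => W (x (π⁻¹ i)) (x (π⁻¹ j)) * f (σmap π⁻¹ x)) ∘ σmap π := by
    funext x
    have h1' : σmap (X := X) π⁻¹ (σmap π x) = x := by
      ext a; simp [σmap]
    simp only [Function.comp_apply, h1']
    congr 2 <;> simp [σmap]
  constructor
  · rw [key]; exact h1.comp_measurePreserving (mp_perm μ π)
  · rw [key]; exact aesm_comp m π h2

lemma update_sigma (π : Equiv.Perm (Fin k)) (x : Fin k → X) (j : Fin k) (y : X) :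
    σmap π⁻¹ (Function.update (σmap π x) (π⁻¹ j) y) = Function.update x j y := by
  funext a
  by_cases h : a = j
  · subst h; simp [σmap, Function.update_apply]
  · have h' : (π⁻¹ a : Fin k) ≠ π⁻¹ j := fun hh => h (π⁻¹.injective hh)
    simp [σmap, Function.update_apply, h, h']

lemma nmaps_Phi (C m : SubSigma (Fin k → X))
    (hCinv : ∀ ρ : Equiv.Perm (Fin k), Phi ρ C.σ = C.σ)
    (hN : NMapsInto μ C m) (π : Equiv.Perm (Fin k)) :
    NMapsInto μ C ⟨Phi π m.σ⟩ := by
  intro j f hf hfm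
  have hF : MemLp (fun x => f (σmap π⁻¹ x)) 2 (Measure.pi fun _ : Fin k => μ) :=
    memlp_comp π⁻¹ hf
  have hFm : AEStronglyMeasurable[C.σ] (fun x => f (σmap π⁻¹ x))
      (Measure.pi fun _ : Fin k => μ) := by
    have h := aesm_comp C π⁻¹ hfm
    rwa [hCinv π⁻¹] at h
  obtain ⟨h1, h2⟩ := hN (π⁻¹ j) _ hF hFm
  have key : (fun x : Fin k → X => ∫ y, f (Function.update x j y) ∂μ)
      = (fun x => ∫ y, f (σmap π⁻¹ (Function.update x (π⁻¹ j) y)) ∂μ) ∘ σmap π := by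
    funext x
    simp only [Function.comp_apply, update_sigma]
  constructor
  · rw [key]; exact h1.comp_measurePreserving (mp_perm μ π)
  · rw [key]; exact aesm_comp m π h2

lemma Phi_sInf_eq {S : Set (MeasurableSpace (Fin k → X))}
    (hS : ∀ (ρ : Equiv.Perm (Fin k)) m, m ∈ S → Phi ρ m ∈ S) (π : Equiv.Perm (Fin k)) :
    Phi π (sInf S) = sInf S := by
  have hle : ∀ ρ : Equiv.Perm (Fin k), Phi ρ (sInf S) ≤ sInf S := by
    intro ρ
    refine le_sInf fun m hm => ?_
    calc Phi ρ (sInf S) ≤ Phi ρ (Phi ρ⁻¹ m) := Phi_mono ρ (sInf_le (hS ρ⁻¹ m hm))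
      _ = m := Phi_inv_Phi ρ m
  refine le_antisymm (hle π) ?_
  have h := Phi_mono π (hle π⁻¹)
  rwa [Phi_inv_Phi] at h

lemma CSeq_inv (W : X → X → ℝ) :
    ∀ n (π : Equiv.Perm (Fin k)), Phi π (CSeq μ W k n) = CSeq μ W k n := by
  intro n
  induction n with
  | zero =>
    intro π
    show Phi π (sInf _) = sInf _
    refine Phi_sInf_eq (fun ρ m hm => ?_) π
    obtain ⟨hm1, hm2, hm3⟩ := hm
    exact ⟨(Phi_mono ρ hm1).trans_eq (Phi_pi ρ), relComplete_Phi ⟨m⟩ hm1 hm2 ρ, ainv_Phi ⟨m⟩ hm3 ρ⟩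
  | succ n ih =>
    intro π
    show Phi π (sInf _) = sInf _
    refine Phi_sInf_eq (fun ρ m hm => ?_) π
    obtain ⟨hm1, hm2, hm3, hm4⟩ := hm
    refine ⟨(Phi_mono ρ hm1).trans_eq (Phi_pi ρ), relComplete_Phi ⟨m⟩ hm1 hm2 ρ, ?_, ?_⟩
    · calc CSeq μ W k n = Phi ρ (CSeq μ W k n) := (ih ρ).symm
        _ ≤ Phi ρ m := Phi_mono ρ hm3
    · exact nmaps_Phi ⟨CSeq μ W k n⟩ ⟨m⟩ ih hm4 ρ

lemma CLimit_inv (W : X → X → ℝ) (π : Equiv.Perm (Fin k)) :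
    Phi π (CLimit μ W k) = CLimit μ W k := by
  show Phi π (sInf _) = sInf _
  refine Phi_sInf_eq (fun ρ m hm => ?_) π
  obtain ⟨hm1, hm2, hm3⟩ := hm
  refine ⟨(Phi_mono ρ hm1).trans_eq (Phi_pi ρ), relComplete_Phi ⟨m⟩ hm1 hm2 ρ, fun n => ?_⟩
  calc CSeq μ W k n = Phi ρ (CSeq μ W k n) := (CSeq_inv W n ρ).symm
    _ ≤ Phi ρ m := Phi_mono ρ (hm3 n)

lemma permInv_of_fixed (C : SubSigma (Fin k → X))
    (hC : ∀ π : Equiv.Perm (Fin k), Phi π C.σ = C.σ) : PermInvariantAlg μ C := by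
  intro π f hf hfm
  constructor
  · exact hf.comp_measurePreserving (mp_perm μ π)
  · have h := aesm_comp C π hfm
    rwa [hC π] at h

end Stmt12Aux

/-- Every σ-algebra `C_n` of the iterative construction, as well as the
limit `C^k_W`, is permutation invariant. -/
theorem stmt12 {X : Type*} [MeasurableSpace X] (μ : Measure X) [IsProbabilityMeasure μ]
    {k : ℕ} (hk : 1 ≤ k) (W : X → X → ℝ) (hW : IsGraphon W) :
    (∀ n : ℕ, PermInvariantAlg μ ⟨CSeq μ W k n⟩) ∧
      PermInvariantAlg μ ⟨CLimit μ W k⟩ := by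
  exact ⟨fun n => Stmt12Aux.permInv_of_fixed _ (Stmt12Aux.CSeq_inv W n),
    Stmt12Aux.permInv_of_fixed _ (Stmt12Aux.CLimit_inv W)⟩
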